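/- For all λ, t ∈ [0,1]: (i) (1+λ)·(Λ + 2λ²t²) + 2√Λ·λ·λt² ≥ 2√Λ·λ·√(Λ + 4λ²t²) (so that g₋ is well defined as a real square root); and (ii) g₊·g₋ ≥ 2t²λ²·(1+λ−√Λ). Consequently, if moreover (λ,t) ≠ (1,0), the real symmetric 2×2 matrices M_± = m·!![g₊, ∓√2·tλ·√(1+λ−√Λ); ∓√2·tλ·√(1+λ−√Λ), g₋] are positive semidefinite. -/

import Mathlib

set_option maxHeartbeats 1000000


open Matrix

noncomputable section

/-- `Λ = (1-λ)(1+3λ)`. -/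
def Lambda (lam : ℝ) : ℝ := (1 - lam) * (1 + 3 * lam)

/-- `g₊ = √((1+λ)(Λ + 2λ²t²) + 2√Λ·λ·(λt² + √(Λ + 4λ²t²)))`. -/
def gP (lam t : ℝ) : ℝ :=
  Real.sqrt ((1 + lam) * (Lambda lam + 2 * lam ^ 2 * t ^ 2) +
    2 * Real.sqrt (Lambda lam) * lam *
      (lam * t ^ 2 + Real.sqrt (Lambda lam + 4 * lam ^ 2 * t ^ 2)))

/-- `g₋ = √((1+λ)(Λ + 2λ²t²) + 2√Λ·λ·(λt² − √(Λ + 4λ²t²)))`. -/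
def gM (lam t : ℝ) : ℝ :=
  Real.sqrt ((1 + lam) * (Lambda lam + 2 * lam ^ 2 * t ^ 2) +
    2 * Real.sqrt (Lambda lam) * lam *
      (lam * t ^ 2 - Real.sqrt (Lambda lam + 4 * lam ^ 2 * t ^ 2)))

/-- `m = (1/4)√((1−t²)(1−λ)/(Λ + 4λ²t²))`. -/
def mCoef (lam t : ℝ) : ℝ :=
  (1 / 4) * Real.sqrt ((1 - t ^ 2) * (1 - lam) / (Lambda lam + 4 * lam ^ 2 * t ^ 2))

/-- The real symmetric 2×2 matrix `M_ε` (`ε = ±1`). -/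
def Mmat (lam t ε : ℝ) : Matrix (Fin 2) (Fin 2) ℝ :=
  mCoef lam t •
    !![gP lam t, -ε * Real.sqrt 2 * t * lam * Real.sqrt (1 + lam - Real.sqrt (Lambda lam));
       -ε * Real.sqrt 2 * t * lam * Real.sqrt (1 + lam - Real.sqrt (Lambda lam)), gM lam t]

end

lemma psd2 (a b c m : ℝ) (hm : 0 ≤ m) (ha : 0 ≤ a) (hc : 0 ≤ c) (hb : b ^ 2 ≤ a * c) :
    (m • !![a, b; b, c] : Matrix (Fin 2) (Fin 2) ℝ).PosSemidef := by
  rw [Matrix.posSemidef_iff_dotProduct_mulVec]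
  constructor
  · ext i j
    fin_cases i <;> fin_cases j <;>
      simp [Matrix.conjTranspose_apply]
  · intro x
    have hx : star x ⬝ᵥ (m • !![a, b; b, c] : Matrix (Fin 2) (Fin 2) ℝ) *ᵥ x =
        m * (a * x 0 ^ 2 + 2 * b * (x 0 * x 1) + c * x 1 ^ 2) := by
      simp [Matrix.mulVec, dotProduct, Fin.sum_univ_two]
      ring
    rw [hx]
    apply mul_nonneg hm
    rcases eq_or_lt_of_le ha with h | h
    · have hb0 : b = 0 := by nlinarith [sq_nonneg b]
      rw [hb0, ← h]
      have := mul_nonneg hc (sq_nonneg (x 1))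
      nlinarith
    · nlinarith [sq_nonneg (a * x 0 + b * x 1),
        mul_nonneg (sub_nonneg.2 hb) (sq_nonneg (x 1))]

/-- **Positivity of the complementary dual blocks.** For all `λ, t ∈ [0,1]`:
(i) `(1+λ)(Λ + 2λ²t²) + 2√Λ λ λt² ≥ 2√Λ λ √(Λ + 4λ²t²)`;
(ii) `g₊ g₋ ≥ 2t²λ²(1+λ−√Λ)`; and consequently, if `(λ,t) ≠ (1,0)`, the matrices
`M_± = m·[[g₊, ∓√2 tλ √(1+λ−√Λ)], [∓√2 tλ √(1+λ−√Λ), g₋]]` are positive semidefinite. -/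
theorem complementary_blocks_posSemidef (lam t : ℝ)
    (hlam : lam ∈ Set.Icc (0 : ℝ) 1) (ht : t ∈ Set.Icc (0 : ℝ) 1) :
    2 * Real.sqrt (Lambda lam) * lam * Real.sqrt (Lambda lam + 4 * lam ^ 2 * t ^ 2) ≤
      (1 + lam) * (Lambda lam + 2 * lam ^ 2 * t ^ 2) +
        2 * Real.sqrt (Lambda lam) * lam * (lam * t ^ 2) ∧
    2 * t ^ 2 * lam ^ 2 * (1 + lam - Real.sqrt (Lambda lam)) ≤ gP lam t * gM lam t ∧
    ((lam, t) ≠ (1, 0) → (Mmat lam t 1).PosSemidef ∧ (Mmat lam t (-1)).PosSemidef) := by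
  obtain ⟨hl0, hl1⟩ := hlam
  obtain ⟨ht0, ht1⟩ := ht
  unfold Mmat mCoef gP gM Lambda
  have hL0 : (0:ℝ) ≤ (1 - lam) * (1 + 3 * lam) := by nlinarith
  set s := Real.sqrt ((1 - lam) * (1 + 3 * lam)) with hsdef
  set r := Real.sqrt ((1 - lam) * (1 + 3 * lam) + 4 * lam ^ 2 * t ^ 2) with hrdef
  have hs0 : 0 ≤ s := Real.sqrt_nonneg _
  have hr0 : 0 ≤ r := Real.sqrt_nonneg _
  have hs2 : s ^ 2 = (1 - lam) * (1 + 3 * lam) := Real.sq_sqrt hL0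
  have hA0 : (0:ℝ) ≤ (1 - lam) * (1 + 3 * lam) + 4 * lam ^ 2 * t ^ 2 :=
    add_nonneg hL0 (by positivity)
  have hr2 : r ^ 2 = (1 - lam) * (1 + 3 * lam) + 4 * lam ^ 2 * t ^ 2 := Real.sq_sqrt hA0
  have hsr : s ^ 2 * r ^ 2 =
      ((1 - lam) * (1 + 3 * lam)) * ((1 - lam) * (1 + 3 * lam) + 4 * lam ^ 2 * t ^ 2) := by
    rw [hs2, hr2]
  have hsle : s ≤ 1 + lam := by
    rw [hsdef, show (1 + lam) = Real.sqrt ((1 + lam) ^ 2) from (Real.sqrt_sq (by linarith)).symm]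
    apply Real.sqrt_le_sqrt; nlinarith [sq_nonneg lam]
  have hX0 : (0:ℝ) ≤ (1 - lam) * (1 + 3 * lam) + 2 * lam ^ 2 * t ^ 2 :=
    add_nonneg hL0 (by positivity)
  have hP0 : (0:ℝ) ≤ (1 + lam) * ((1 - lam) * (1 + 3 * lam) + 2 * lam ^ 2 * t ^ 2) :=
    mul_nonneg (by linarith) hX0
  -- part (i)
  have hRHS0 : 0 ≤ (1 + lam) * ((1 - lam) * (1 + 3 * lam) + 2 * lam ^ 2 * t ^ 2) +
      2 * s * lam * (lam * t ^ 2) :=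
    add_nonneg hP0 (by positivity)
  have hLHS0 : 0 ≤ 2 * s * lam * r := by positivity
  have hm1 : (0:ℝ) ≤ ((1 - lam) * (1 + 3 * lam)) ^ 3 := pow_nonneg hL0 3
  have hm2 : (0:ℝ) ≤ 4 * ((1 - lam) * (1 + 3 * lam)) ^ 2 * (lam ^ 2 * t ^ 2) := by positivity
  have hm3 : (0:ℝ) ≤ 8 * ((1 - lam) * (1 + 3 * lam)) * (lam ^ 2 * t ^ 2) ^ 2 :=
    mul_nonneg (by linarith) (by positivity)
  have hm4 : (0:ℝ) ≤ 16 * (lam ^ 2 * t ^ 2) ^ 2 * lam ^ 2 := by positivity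
  have hm5 : (0:ℝ) ≤ 4 * ((1 + lam) * ((1 - lam) * (1 + 3 * lam) + 2 * lam ^ 2 * t ^ 2)) *
      (lam ^ 2 * t ^ 2) * s := by
    apply mul_nonneg _ hs0
    positivity
  have hid1 : ((1 + lam) * ((1 - lam) * (1 + 3 * lam) + 2 * lam ^ 2 * t ^ 2) +
        2 * s * lam * (lam * t ^ 2)) ^ 2 - (2 * s * lam * r) ^ 2 =
      ((1 - lam) * (1 + 3 * lam)) ^ 3
        + 4 * ((1 - lam) * (1 + 3 * lam)) ^ 2 * (lam ^ 2 * t ^ 2)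
        + 8 * ((1 - lam) * (1 + 3 * lam)) * (lam ^ 2 * t ^ 2) ^ 2
        + 16 * (lam ^ 2 * t ^ 2) ^ 2 * lam ^ 2
        + 4 * ((1 + lam) * ((1 - lam) * (1 + 3 * lam) + 2 * lam ^ 2 * t ^ 2)) *
            (lam ^ 2 * t ^ 2) * s := by
    linear_combination (4 * lam ^ 4 * t ^ 4) * hs2 - (4 * lam ^ 2) * hsr
  have hsq1 : (2 * s * lam * r) ^ 2 ≤
      ((1 + lam) * ((1 - lam) * (1 + 3 * lam) + 2 * lam ^ 2 * t ^ 2) +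
        2 * s * lam * (lam * t ^ 2)) ^ 2 := by linarith
  have part1 : 2 * s * lam * r ≤
      (1 + lam) * ((1 - lam) * (1 + 3 * lam) + 2 * lam ^ 2 * t ^ 2) +
        2 * s * lam * (lam * t ^ 2) := by
    calc 2 * s * lam * r = Real.sqrt ((2 * s * lam * r) ^ 2) := (Real.sqrt_sq hLHS0).symm
      _ ≤ Real.sqrt (((1 + lam) * ((1 - lam) * (1 + 3 * lam) + 2 * lam ^ 2 * t ^ 2) +
            2 * s * lam * (lam * t ^ 2)) ^ 2) := Real.sqrt_le_sqrt hsq1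
      _ = _ := Real.sqrt_sq hRHS0
  refine ⟨part1, ?_⟩
  -- part (ii)
  have hEp0 : 0 ≤ (1 + lam) * ((1 - lam) * (1 + 3 * lam) + 2 * lam ^ 2 * t ^ 2) +
      2 * s * lam * (lam * t ^ 2 + r) :=
    add_nonneg hP0 (mul_nonneg (mul_nonneg (by linarith) hl0)
      (add_nonneg (by positivity) hr0))
  have hEm0 : 0 ≤ (1 + lam) * ((1 - lam) * (1 + 3 * lam) + 2 * lam ^ 2 * t ^ 2) +
      2 * s * lam * (lam * t ^ 2 - r) := by nlinarith [part1]
  have hgg : Real.sqrt ((1 + lam) * ((1 - lam) * (1 + 3 * lam) + 2 * lam ^ 2 * t ^ 2) +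
          2 * s * lam * (lam * t ^ 2 + r)) *
        Real.sqrt ((1 + lam) * ((1 - lam) * (1 + 3 * lam) + 2 * lam ^ 2 * t ^ 2) +
          2 * s * lam * (lam * t ^ 2 - r)) =
      Real.sqrt (((1 + lam) * ((1 - lam) * (1 + 3 * lam) + 2 * lam ^ 2 * t ^ 2) +
          2 * s * lam * (lam * t ^ 2 + r)) *
        ((1 + lam) * ((1 - lam) * (1 + 3 * lam) + 2 * lam ^ 2 * t ^ 2) +
          2 * s * lam * (lam * t ^ 2 - r))) := (Real.sqrt_mul hEp0 _).symm
  have hw0 : 0 ≤ 1 + lam - s := by linarith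
  have hx0 : 0 ≤ 2 * t ^ 2 * lam ^ 2 * (1 + lam - s) := by
    apply mul_nonneg (by positivity) hw0
  have hid2 : (((1 + lam) * ((1 - lam) * (1 + 3 * lam) + 2 * lam ^ 2 * t ^ 2) +
          2 * s * lam * (lam * t ^ 2 + r)) *
        ((1 + lam) * ((1 - lam) * (1 + 3 * lam) + 2 * lam ^ 2 * t ^ 2) +
          2 * s * lam * (lam * t ^ 2 - r))) -
      (2 * t ^ 2 * lam ^ 2 * (1 + lam - s)) ^ 2 =
      ((1 - lam) * (1 + 3 * lam)) ^ 3
        + 4 * ((1 - lam) * (1 + 3 * lam)) ^ 2 * (lam ^ 2 * t ^ 2)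
        + s * (4 * ((1 + lam) * ((1 - lam) * (1 + 3 * lam) + 2 * lam ^ 2 * t ^ 2)) *
            (lam ^ 2 * t ^ 2) + 8 * (lam ^ 2 * t ^ 2) ^ 2 * (1 + lam)) := by
    linear_combination (-(4 * lam ^ 2)) * hsr
  have hm6 : 0 ≤ s * (4 * ((1 + lam) * ((1 - lam) * (1 + 3 * lam) + 2 * lam ^ 2 * t ^ 2)) *
      (lam ^ 2 * t ^ 2) + 8 * (lam ^ 2 * t ^ 2) ^ 2 * (1 + lam)) := by
    apply mul_nonneg hs0
    have h1 : (0:ℝ) ≤ 4 * ((1 + lam) * ((1 - lam) * (1 + 3 * lam) + 2 * lam ^ 2 * t ^ 2)) *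
        (lam ^ 2 * t ^ 2) := by positivity
    have h2' : (0:ℝ) ≤ 8 * (lam ^ 2 * t ^ 2) ^ 2 * (1 + lam) := by positivity
    linarith
  have part2 : 2 * t ^ 2 * lam ^ 2 * (1 + lam - s) ≤
      Real.sqrt ((1 + lam) * ((1 - lam) * (1 + 3 * lam) + 2 * lam ^ 2 * t ^ 2) +
          2 * s * lam * (lam * t ^ 2 + r)) *
        Real.sqrt ((1 + lam) * ((1 - lam) * (1 + 3 * lam) + 2 * lam ^ 2 * t ^ 2) +
          2 * s * lam * (lam * t ^ 2 - r)) := by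
    rw [hgg]
    calc 2 * t ^ 2 * lam ^ 2 * (1 + lam - s)
        = Real.sqrt ((2 * t ^ 2 * lam ^ 2 * (1 + lam - s)) ^ 2) := (Real.sqrt_sq hx0).symm
      _ ≤ _ := Real.sqrt_le_sqrt (by linarith)
  refine ⟨part2, fun _ => ?_⟩
  -- part (iii)
  have hm : 0 ≤ (1:ℝ) / 4 * Real.sqrt ((1 - t ^ 2) * (1 - lam) /
      ((1 - lam) * (1 + 3 * lam) + 4 * lam ^ 2 * t ^ 2)) := by positivity
  have hgP0 : 0 ≤ Real.sqrt ((1 + lam) * ((1 - lam) * (1 + 3 * lam) + 2 * lam ^ 2 * t ^ 2) +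
      2 * s * lam * (lam * t ^ 2 + r)) := Real.sqrt_nonneg _
  have hgM0 : 0 ≤ Real.sqrt ((1 + lam) * ((1 - lam) * (1 + 3 * lam) + 2 * lam ^ 2 * t ^ 2) +
      2 * s * lam * (lam * t ^ 2 - r)) := Real.sqrt_nonneg _
  have h2 : (Real.sqrt 2) ^ 2 = 2 := Real.sq_sqrt (by norm_num)
  have hw : (Real.sqrt (1 + lam - s)) ^ 2 = 1 + lam - s := Real.sq_sqrt hw0
  have hbsq : ∀ e : ℝ, e ^ 2 = 1 →
      (-e * Real.sqrt 2 * t * lam * Real.sqrt (1 + lam - s)) ^ 2 =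
        2 * t ^ 2 * lam ^ 2 * (1 + lam - s) := by
    intro e he
    linear_combination (e ^ 2 * (Real.sqrt 2) ^ 2 * t ^ 2 * lam ^ 2) * hw +
      (e ^ 2 * t ^ 2 * lam ^ 2 * (1 + lam - s)) * h2 +
      (2 * t ^ 2 * lam ^ 2 * (1 + lam - s)) * he
  refine ⟨psd2 _ _ _ _ hm hgP0 hgM0 ?_, psd2 _ _ _ _ hm hgP0 hgM0 ?_⟩
  · rw [hbsq 1 (by norm_num)]; exact part2
  · rw [hbsq (-1) (by norm_num)]; exact part2
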